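/- The naive Wasserstein-DRO Kelly objective on simple returns is unbounded below: for any w in the simplex, any ε > 0, and any p ≥ 1, the infimum of E_F[log(1 + ⟨R, w⟩)] over distributions F within type-p Wasserstein distance ε of the empirical distribution of simple returns equals −∞ (the objective is not bounded below), since mass can be moved toward points where 1 + ⟨R, w⟩ → 0. -/

import Mathlib

open MeasureTheory ENNReal

/-- The type-`p` Wasserstein distance between two measures on a normed space,
defined via couplings. -/
noncomputable def wassersteinDist {E : Type*} [NormedAddCommGroup E] [MeasurableSpace E]
    (p : ℝ) (μ ν : Measure E) : ℝ≥0∞ :=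
  ⨅ (π : Measure (E × E)) (_ : IsProbabilityMeasure π)
    (_ : π.map Prod.fst = μ) (_ : π.map Prod.snd = ν),
    (∫⁻ x, ENNReal.ofReal (‖x.1 - x.2‖ ^ p) ∂π) ^ (1 / p)

private lemma map_finset_sum' {α β ι : Type*} [MeasurableSpace α] [MeasurableSpace β]
    {f : α → β} (hf : Measurable f) (s : Finset ι) (μ : ι → Measure α) :
    (∑ i ∈ s, μ i).map f = ∑ i ∈ s, (μ i).map f := by
  classical
  induction s using Finset.induction_on with
  | empty => simp
  | insert _ _ h ih =>
      rw [Finset.sum_insert h, Finset.sum_insert h, Measure.map_add _ _ hf, ih]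

private lemma integrable_dirac'' {α : Type*} [MeasurableSpace α] {f : α → ℝ}
    (hf : Measurable f) (a : α) : Integrable f (Measure.dirac a) := by
  refine ⟨hf.aestronglyMeasurable, ?_⟩
  simp only [HasFiniteIntegral]
  rw [lintegral_dirac' _ hf.enorm]
  exact ENNReal.coe_lt_top

/-- The naive Wasserstein-DRO Kelly objective on simple returns is unbounded
below: for any simplex portfolio `w` with some `w i > 0`, any `ε > 0` and
`p ≥ 1`, and samples in `(-1, ∞)^n`, the worst-case expectation of
`log (1 + ⟨R, w⟩)` over the type-`p` Wasserstein ball of radius `ε` around the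
empirical distribution is `-∞`: below any threshold `M` there is a feasible
distribution. -/
theorem stmt_9 (n N : ℕ) (hn : 1 ≤ n) (hN : 1 ≤ N)
    (Rhat : Fin N → Fin n → ℝ) (hRhat : ∀ j i, -1 < Rhat j i)
    (w : Fin n → ℝ) (hw_nonneg : ∀ i, 0 ≤ w i) (hw_sum : ∑ i, w i = 1)
    (hw_pos : ∃ i, 0 < w i)
    (ε p : ℝ) (hε : 0 < ε) (hp : 1 ≤ p) :
    ∀ M : ℝ, ∃ F : Measure (Fin n → ℝ), IsProbabilityMeasure F ∧
      wassersteinDist p F ((N : ℝ≥0∞)⁻¹ • ∑ j, Measure.dirac (Rhat j)) ≤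
        ENNReal.ofReal ε ∧
      Integrable (fun R => Real.log (1 + ∑ i, R i * w i)) F ∧
      (∫ R, Real.log (1 + ∑ i, R i * w i) ∂F) < M := by
  classical
  intro M
  obtain ⟨i0, hi0⟩ := hw_pos
  have hNpos : 0 < N := hN
  haveI : Nonempty (Fin N) := ⟨⟨0, hNpos⟩⟩
  set f : (Fin n → ℝ) → ℝ := fun R => Real.log (1 + ∑ i, R i * w i) with hf_def
  have hf_meas : Measurable f := by
    apply Real.measurable_log.comp
    exact measurable_const.add
      (Finset.measurable_sum _ fun i _ => (measurable_pi_apply i).mul_const _)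
  set s : Fin N → ℝ := fun j => ∑ i, Rhat j i * w i with hs_def
  have hs : ∀ j, 0 < 1 + s j := by
    intro j
    have h1 : 1 + s j = ∑ i, (w i + Rhat j i * w i) := by
      rw [Finset.sum_add_distrib, hw_sum]
    rw [h1]
    apply Finset.sum_pos'
    · intro i _
      have := hRhat j i
      nlinarith [hw_nonneg i]
    · exact ⟨i0, Finset.mem_univ _, by nlinarith [hRhat j i0]⟩
  set m : ℝ := Finset.univ.inf' Finset.univ_nonempty (fun j => 1 + s j) with hm_def
  have hm : 0 < m := by
    rw [hm_def, Finset.lt_inf'_iff]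
    exact fun j _ => hs j
  set S : ℝ := Finset.univ.sup' Finset.univ_nonempty (fun j => 1 + s j) with hS_def
  have hS : 0 < S := by
    obtain ⟨j⟩ := ‹Nonempty (Fin N)›
    exact lt_of_lt_of_le (hs j)
      (Finset.le_sup' (fun j => 1 + s j) (Finset.mem_univ j))
  set C : ℝ := S / w i0 with hC_def
  have hC : 0 < C := div_pos hS hi0
  have hp0 : 0 < p := by linarith
  set δ : ℝ := min 1 ((ε / C) ^ p) with hδ_def
  have hδ0 : 0 < δ := lt_min one_pos (Real.rpow_pos_of_pos (div_pos hε hC) p)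
  have hδ1 : δ ≤ 1 := min_le_left _ _
  set B : ℝ := (N : ℝ)⁻¹ * ∑ j, (1 - δ) * f (Rhat j) with hB_def
  set t : ℝ := min (m / 2) (Real.exp ((M - B - 1) / δ)) with ht_def
  have ht0 : 0 < t := lt_min (by linarith) (Real.exp_pos _)
  have htm : ∀ j, t ≤ 1 + s j := by
    intro j
    have h1 : t ≤ m / 2 := min_le_left _ _
    have h2 : m ≤ 1 + s j := Finset.inf'_le _ (Finset.mem_univ j)
    linarith
  have htlog : δ * Real.log t ≤ M - B - 1 := by
    have h1 : Real.log t ≤ (M - B - 1) / δ := by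
      calc Real.log t ≤ Real.log (Real.exp ((M - B - 1) / δ)) :=
            Real.log_le_log ht0 (min_le_right _ _)
        _ = (M - B - 1) / δ := Real.log_exp _
    calc δ * Real.log t ≤ δ * ((M - B - 1) / δ) := by nlinarith
      _ = M - B - 1 := by field_simp
  set c : Fin N → ℝ := fun j => (1 + s j - t) / w i0 with hc_def
  have hc0 : ∀ j, 0 ≤ c j := fun j => div_nonneg (by linarith [htm j]) hi0.le
  have hcC : ∀ j, c j ≤ C := by
    intro j
    have h1 : 1 + s j - t ≤ S :=
      le_trans (by linarith [ht0]) (Finset.le_sup' (fun j => 1 + s j) (Finset.mem_univ j))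
    show (1 + s j - t) / w i0 ≤ S / w i0
    exact (div_le_div_iff_of_pos_right hi0).mpr h1
  set x : Fin N → (Fin n → ℝ) := fun j i => Rhat j i - (if i = i0 then c j else 0)
    with hx_def
  have hx_sum : ∀ j, 1 + ∑ i, x j i * w i = t := by
    intro j
    have h2 : ∀ i, x j i * w i = Rhat j i * w i - (if i = i0 then c j * w i else 0) := by
      intro i
      simp only [hx_def, sub_mul, ite_mul, zero_mul]
    have h1 : ∑ i, x j i * w i = s j - c j * w i0 := by
      rw [Finset.sum_congr rfl (fun i _ => h2 i), Finset.sum_sub_distrib,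
        Finset.sum_ite_eq' Finset.univ i0 (fun i => c j * w i)]
      simp [hs_def]
    rw [h1, hc_def]
    field_simp
    ring
  have hx_norm : ∀ j, ‖x j - Rhat j‖ ≤ C := by
    intro j
    rw [pi_norm_le_iff_of_nonneg hC.le]
    intro i
    have h1 : (x j - Rhat j) i = -(if i = i0 then c j else 0) := by
      simp only [hx_def, Pi.sub_apply]; ring
    rw [h1, norm_neg]
    split_ifs
    · rw [Real.norm_eq_abs, abs_of_nonneg (hc0 j)]; exact hcC j
    · simpa using hC.le
  set a : ℝ≥0∞ := ENNReal.ofReal (1 - δ) with ha_def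
  set b : ℝ≥0∞ := ENNReal.ofReal δ with hb_def
  have hab : a + b = 1 := by
    rw [ha_def, hb_def, ← ENNReal.ofReal_add (by linarith) hδ0.le]
    norm_num
  have hN0 : (N : ℝ≥0∞) ≠ 0 := Nat.cast_ne_zero.mpr hNpos.ne'
  have hNtop : (N : ℝ≥0∞) ≠ ⊤ := ENNReal.natCast_ne_top N
  set F : Measure (Fin n → ℝ) :=
    (N : ℝ≥0∞)⁻¹ • ∑ j, (a • Measure.dirac (Rhat j) + b • Measure.dirac (x j)) with hF_def
  set π : Measure ((Fin n → ℝ) × (Fin n → ℝ)) :=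
    (N : ℝ≥0∞)⁻¹ • ∑ j, (a • Measure.dirac (Rhat j, Rhat j) +
      b • Measure.dirac (x j, Rhat j)) with hπ_def
  have hterm_univ : ∀ {E : Type} [MeasurableSpace E] (u v : E),
      (a • Measure.dirac u + b • Measure.dirac v) Set.univ = 1 := by
    intro E _ u v
    rw [Measure.add_apply, Measure.smul_apply, Measure.smul_apply, measure_univ,
      measure_univ, smul_eq_mul, smul_eq_mul, mul_one, mul_one, hab]
  have hFprob : IsProbabilityMeasure F := by
    constructor
    rw [hF_def, Measure.smul_apply, Measure.finset_sum_apply,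
      Finset.sum_congr rfl (fun j _ => hterm_univ (Rhat j) (x j)),
      Finset.sum_const, Finset.card_univ, Fintype.card_fin, nsmul_eq_mul, mul_one,
      smul_eq_mul, ENNReal.inv_mul_cancel hN0 hNtop]
  have hπprob : IsProbabilityMeasure π := by
    constructor
    rw [hπ_def, Measure.smul_apply, Measure.finset_sum_apply,
      Finset.sum_congr rfl (fun j _ => hterm_univ (Rhat j, Rhat j) (x j, Rhat j)),
      Finset.sum_const, Finset.card_univ, Fintype.card_fin, nsmul_eq_mul, mul_one,
      smul_eq_mul, ENNReal.inv_mul_cancel hN0 hNtop]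
  have hfst : π.map Prod.fst = F := by
    rw [hπ_def, hF_def, Measure.map_smul, map_finset_sum' measurable_fst]
    congr 1
    refine Finset.sum_congr rfl fun j _ => ?_
    rw [Measure.map_add _ _ measurable_fst, Measure.map_smul, Measure.map_smul,
      Measure.map_dirac' measurable_fst, Measure.map_dirac' measurable_fst]
  have hsnd : π.map Prod.snd = (N : ℝ≥0∞)⁻¹ • ∑ j, Measure.dirac (Rhat j) := by
    rw [hπ_def, Measure.map_smul, map_finset_sum' measurable_snd]
    congr 1
    refine Finset.sum_congr rfl fun j _ => ?_
    rw [Measure.map_add _ _ measurable_snd, Measure.map_smul, Measure.map_smul,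
      Measure.map_dirac' measurable_snd, Measure.map_dirac' measurable_snd,
      ← add_smul, hab, one_smul]
  -- cost bound
  set g : (Fin n → ℝ) × (Fin n → ℝ) → ℝ≥0∞ :=
    fun y => ENNReal.ofReal (‖y.1 - y.2‖ ^ p) with hg_def
  have hg : Measurable g := by
    apply ENNReal.measurable_ofReal.comp
    exact (Real.continuous_rpow_const hp0.le).measurable.comp
      ((measurable_fst.sub measurable_snd).norm)
  have hcost : (∫⁻ y, g y ∂π) ≤ ENNReal.ofReal (δ * C ^ p) := by
    rw [hπ_def, lintegral_smul_measure, lintegral_finset_sum_measure]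
    have hterm : ∀ j : Fin N,
        (∫⁻ y, g y ∂(a • Measure.dirac (Rhat j, Rhat j) + b • Measure.dirac (x j, Rhat j)))
          ≤ b * ENNReal.ofReal (C ^ p) := by
      intro j
      rw [lintegral_add_measure, lintegral_smul_measure, lintegral_smul_measure,
        lintegral_dirac' _ hg, lintegral_dirac' _ hg]
      have h1 : g (Rhat j, Rhat j) = 0 := by
        simp only [hg_def]
        rw [sub_self, norm_zero, Real.zero_rpow hp0.ne', ENNReal.ofReal_zero]
      have h2 : g (x j, Rhat j) ≤ ENNReal.ofReal (C ^ p) := by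
        apply ENNReal.ofReal_le_ofReal
        exact Real.rpow_le_rpow (norm_nonneg _) (hx_norm j) hp0.le
      calc a * g (Rhat j, Rhat j) + b * g (x j, Rhat j)
          = b * g (x j, Rhat j) := by rw [h1, mul_zero, zero_add]
        _ ≤ b * ENNReal.ofReal (C ^ p) := mul_le_mul_right h2 _
    calc (N : ℝ≥0∞)⁻¹ • ∑ j, (∫⁻ y, g y
            ∂(a • Measure.dirac (Rhat j, Rhat j) + b • Measure.dirac (x j, Rhat j)))
        ≤ (N : ℝ≥0∞)⁻¹ * ∑ _j : Fin N, b * ENNReal.ofReal (C ^ p) := by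
          rw [smul_eq_mul]
          exact mul_le_mul_right (Finset.sum_le_sum fun j _ => hterm j) _
      _ = b * ENNReal.ofReal (C ^ p) := by
          rw [Finset.sum_const, Finset.card_univ, Fintype.card_fin, nsmul_eq_mul,
            ← mul_assoc, ENNReal.inv_mul_cancel hN0 hNtop, one_mul]
      _ = ENNReal.ofReal (δ * C ^ p) := by
          rw [hb_def, ← ENNReal.ofReal_mul hδ0.le]
  have hreal : (δ * C ^ p) ^ (1 / p) ≤ ε := by
    have h2 : δ ≤ (ε / C) ^ p := min_le_right _ _
    have h3 : δ * C ^ p ≤ (ε / C) ^ p * C ^ p :=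
      mul_le_mul_of_nonneg_right h2 (Real.rpow_nonneg hC.le p)
    have h1 : δ * C ^ p ≤ ε ^ p := by
      rwa [← Real.mul_rpow (div_nonneg hε.le hC.le) hC.le,
        div_mul_cancel₀ _ hC.ne'] at h3
    calc (δ * C ^ p) ^ (1 / p) ≤ (ε ^ p) ^ (1 / p) :=
          Real.rpow_le_rpow (by positivity) h1 (by positivity)
      _ = ε := by
          rw [← Real.rpow_mul hε.le, mul_one_div, div_self hp0.ne', Real.rpow_one]
  have hwass : wassersteinDist p F ((N : ℝ≥0∞)⁻¹ • ∑ j, Measure.dirac (Rhat j)) ≤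
      ENNReal.ofReal ε := by
    have hle : wassersteinDist p F ((N : ℝ≥0∞)⁻¹ • ∑ j, Measure.dirac (Rhat j)) ≤
        (∫⁻ y, g y ∂π) ^ (1 / p) := by
      rw [wassersteinDist]
      refine iInf_le_of_le π ?_
      refine iInf_le_of_le hπprob ?_
      refine iInf_le_of_le hfst ?_
      exact iInf_le _ hsnd
    refine hle.trans ?_
    calc (∫⁻ y, g y ∂π) ^ (1 / p) ≤ (ENNReal.ofReal (δ * C ^ p)) ^ (1 / p) :=
          ENNReal.rpow_le_rpow hcost (by positivity)
      _ = ENNReal.ofReal ((δ * C ^ p) ^ (1 / p)) :=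
          ENNReal.ofReal_rpow_of_nonneg (by positivity) (by positivity)
      _ ≤ ENNReal.ofReal ε := ENNReal.ofReal_le_ofReal hreal
  -- integrability
  have hintj : ∀ j ∈ Finset.univ,
      Integrable f (a • Measure.dirac (Rhat j) + b • Measure.dirac (x j)) := by
    intro j _
    exact Integrable.add_measure
      ((integrable_dirac'' hf_meas _).smul_measure ENNReal.ofReal_ne_top)
      ((integrable_dirac'' hf_meas _).smul_measure ENNReal.ofReal_ne_top)
  have hint : Integrable f F := by
    rw [hF_def]
    refine Integrable.smul_measure ?_ (ENNReal.inv_ne_top.mpr hN0)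
    rw [integrable_finset_sum_measure]
    exact hintj
  have hNR : (N : ℝ) ≠ 0 := Nat.cast_ne_zero.mpr hNpos.ne'
  have hval : ∫ R, f R ∂F = B + δ * Real.log t := by
    rw [hF_def, integral_smul_measure, integral_finset_sum_measure hintj]
    have hj : ∀ j : Fin N,
        ∫ R, f R ∂(a • Measure.dirac (Rhat j) + b • Measure.dirac (x j)) =
          (1 - δ) * f (Rhat j) + δ * Real.log t := by
      intro j
      rw [integral_add_measure
        ((integrable_dirac'' hf_meas _).smul_measure ENNReal.ofReal_ne_top)
        ((integrable_dirac'' hf_meas _).smul_measure ENNReal.ofReal_ne_top),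
        integral_smul_measure, integral_smul_measure, integral_dirac f,
        integral_dirac f, ENNReal.toReal_ofReal (by linarith : (0:ℝ) ≤ 1 - δ),
        ENNReal.toReal_ofReal hδ0.le, smul_eq_mul, smul_eq_mul]
      have hfx : f (x j) = Real.log t := by
        rw [hf_def]
        simp only []
        rw [hx_sum j]
      rw [hfx]
    rw [Finset.sum_congr rfl (fun j _ => hj j), Finset.sum_add_distrib,
      Finset.sum_const, Finset.card_univ, Fintype.card_fin, nsmul_eq_mul, smul_eq_mul]
    have htoReal : ((N : ℝ≥0∞)⁻¹).toReal = (N : ℝ)⁻¹ := by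
      rw [ENNReal.toReal_inv]; simp
    rw [htoReal, mul_add, hB_def, ← mul_assoc, inv_mul_cancel₀ hNR, one_mul]
  refine ⟨F, hFprob, hwass, hint, ?_⟩
  rw [hval]
  linarith
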